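/- Let 0 ≤ r < 1 and let Z = (Z_1,…,Z_d) be a d-tuple of n×n complex matrices with Z_1Z_1ᴴ + ⋯ + Z_dZ_dᴴ ≤ r²·1 in the Loewner order. Then for all y, v ∈ ℂⁿ with ‖y‖ ≤ 1 and ‖v‖ ≤ 1, the family α ↦ ‖⟪Z^α v, y⟫‖² (indexed by the free monoid 𝔽^d) is summable and ∑'_α ‖⟪Z^α v, y⟫‖² ≤ 1/(1 − r²). (This is the uniform norm bound ‖K{Z, y, v}‖² ≤ 1/(1 − r²) for NC Szegő kernel vectors at points of row norm at most r.) -/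

import Mathlib

noncomputable section

open scoped ComplexConjugate
open Matrix
open scoped ComplexOrder

abbrev Word (d : ℕ) := FreeMonoid (Fin d)

instance {d : ℕ} : DecidableEq (Word d) :=
  fun a b => decidable_of_iff (FreeMonoid.toList a = FreeMonoid.toList b)
    FreeMonoid.toList.injective.eq_iff

abbrev Fock (d : ℕ) := lp (fun _ : Word d => ℂ) 2

abbrev fockBasis (d : ℕ) (α : Word d) : Fock d := lp.single 2 α (1 : ℂ)

/-- Product of the matrices `Z i` along the word `α`. -/
def wordProdM {d : ℕ} {n : Type} [Fintype n] [DecidableEq n]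
    (Z : Fin d → Matrix n n ℂ) (α : Word d) : Matrix n n ℂ :=
  (α.toList.map Z).prod

/-- Evaluation of a power series with coefficients `c` at the matrix tuple `Z`. -/
def evalM {d : ℕ} {n : Type} [Fintype n] [DecidableEq n]
    (c : Word d → ℂ) (Z : Fin d → Matrix n n ℂ) : Matrix n n ℂ :=
  ∑' α : Word d, c α • wordProdM Z α

def IsStrictRowContraction {d : ℕ} {n : Type} [Fintype n] [DecidableEq n]
    (Z : Fin d → Matrix n n ℂ) : Prop :=
  (1 - ∑ i, Z i * (Z i)ᴴ).PosDef

abbrev L2N := lp (fun _ : ℕ => ℂ) 2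

def wordProdO {d : ℕ} (Z : Fin d → (L2N →L[ℂ] L2N)) (α : Word d) : L2N →L[ℂ] L2N :=
  (α.toList.map Z).prod

def evalO {d : ℕ} (c : Word d → ℂ) (Z : Fin d → (L2N →L[ℂ] L2N)) : L2N →L[ℂ] L2N :=
  ∑' α : Word d, c α • wordProdO Z α

def IsStrictRowContractionO {d : ℕ} (Z : Fin d → (L2N →L[ℂ] L2N)) : Prop :=
  ∃ r : ℝ, r < 1 ∧
    ((r ^ 2 : ℂ) • (1 : L2N →L[ℂ] L2N)
      - ∑ i, Z i ∘L ContinuousLinearMap.adjoint (Z i)).IsPositive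

/-- The singularity space `𝒮(f)`. -/
def SingSpace {d : ℕ} (f : Word d → ℂ) : Set (Fock d) :=
  {h | (∀ (n : ℕ) (Z : Fin d → Matrix (Fin n) (Fin n) ℂ) (y : Fin n → ℂ),
          IsStrictRowContraction Z → (evalM f Z)ᴴ *ᵥ y = 0 → (evalM (h ·) Z)ᴴ *ᵥ y = 0) ∧
       (∀ (Z : Fin d → (L2N →L[ℂ] L2N)) (y : L2N),
          IsStrictRowContractionO Z → ContinuousLinearMap.adjoint (evalO f Z) y = 0 →
          ContinuousLinearMap.adjoint (evalO (h ·) Z) y = 0)}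

def wordOp {d : ℕ} (R : Fin d → (Fock d →L[ℂ] Fock d)) (α : Word d) :
    Fock d →L[ℂ] Fock d :=
  (α.toList.map R).prod

/-- `f` is cyclic for the right creation operators. -/
def IsNCOuter {d : ℕ} (R : Fin d → (Fock d →L[ℂ] Fock d)) (f : Fock d) : Prop :=
  (Submodule.span ℂ {g : Fock d | ∃ α : Word d, g = wordOp R α f}).topologicalClosure = ⊤

def IsNCInner {d : ℕ} (R : Fin d → (Fock d →L[ℂ] Fock d))
    (Θ : Fock d →L[ℂ] Fock d) : Prop :=
  (∀ x, ‖Θ x‖ = ‖x‖) ∧ ∀ i, Θ ∘L R i = R i ∘L Θ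

namespace SzegoAux

def sq2 {n : ℕ} (w : Fin n → ℂ) : ℝ := ∑ j, ‖w j‖ ^ 2

lemma sq2_nonneg {n : ℕ} (w : Fin n → ℂ) : 0 ≤ sq2 w :=
  Finset.sum_nonneg fun _ _ => sq_nonneg _

lemma dot_star_self {n : ℕ} (u : Fin n → ℂ) :
    dotProduct (star u) u = ((sq2 u : ℝ) : ℂ) := by
  simp only [sq2, dotProduct, Pi.star_apply, Complex.ofReal_sum]
  refine Finset.sum_congr rfl fun j _ => ?_
  rw [mul_comm]
  push_cast
  exact Complex.mul_conj' (u j)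

lemma cauchy_schwarz {n : ℕ} (v w : Fin n → ℂ) :
    ‖dotProduct (star v) w‖ ^ 2 ≤ sq2 v * sq2 w := by
  have h1 : ‖dotProduct (star v) w‖ ≤ ∑ j, ‖v j‖ * ‖w j‖ := by
    refine (norm_sum_le _ _).trans ?_
    refine Finset.sum_le_sum fun j _ => ?_
    rw [norm_mul, Pi.star_apply, norm_star]
  calc ‖dotProduct (star v) w‖ ^ 2 ≤ (∑ j, ‖v j‖ * ‖w j‖) ^ 2 :=
        pow_le_pow_left₀ (norm_nonneg _) h1 2
    _ ≤ sq2 v * sq2 w := Finset.sum_mul_sq_le_sq_mul_sq _ _ _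

lemma rowsum_bound {d n : ℕ} {r : ℝ} (Z : Fin d → Matrix (Fin n) (Fin n) ℂ)
    (hZ : ((r ^ 2 : ℂ) • (1 : Matrix (Fin n) (Fin n) ℂ) - ∑ i, Z i * (Z i)ᴴ).PosSemidef)
    (w : Fin n → ℂ) :
    ∑ i, sq2 ((Z i)ᴴ *ᵥ w) ≤ r ^ 2 * sq2 w := by
  have h0 := hZ.dotProduct_mulVec_nonneg w
  have h1 : ∀ i : Fin d, dotProduct (star w) ((Z i * (Z i)ᴴ) *ᵥ w)
      = ((sq2 ((Z i)ᴴ *ᵥ w) : ℝ) : ℂ) := by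
    intro i
    rw [← Matrix.mulVec_mulVec, Matrix.dotProduct_mulVec,
      show star w ᵥ* Z i = star ((Z i)ᴴ *ᵥ w) by
        rw [Matrix.star_mulVec, Matrix.conjTranspose_conjTranspose],
      dot_star_self]
  have hsum : (∑ i, Z i * (Z i)ᴴ) *ᵥ w = ∑ i, (Z i * (Z i)ᴴ) *ᵥ w :=
    map_sum (Matrix.mulVec.addMonoidHomLeft w) _ _
  have hexp : dotProduct (star w) ((∑ i, (Z i * (Z i)ᴴ) *ᵥ w))
      = ∑ i, dotProduct (star w) ((Z i * (Z i)ᴴ) *ᵥ w) := by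
    simp only [dotProduct, Finset.sum_apply, Finset.mul_sum]
    exact Finset.sum_comm
  have key : dotProduct (star w)
        ((((r ^ 2 : ℂ) • (1 : Matrix (Fin n) (Fin n) ℂ) - ∑ i, Z i * (Z i)ᴴ)) *ᵥ w)
      = (((r ^ 2 * sq2 w - ∑ i, sq2 ((Z i)ᴴ *ᵥ w) : ℝ)) : ℂ) := by
    rw [Matrix.sub_mulVec, dotProduct_sub, Matrix.smul_mulVec,
      dotProduct_smul, Matrix.one_mulVec, dot_star_self, hsum, hexp]
    simp only [h1, smul_eq_mul]
    push_cast
    ring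
  rw [key, Complex.zero_le_real] at h0
  linarith

lemma tuple_sum_bound {d n : ℕ} {r : ℝ} (hr0 : 0 ≤ r)
    (Z : Fin d → Matrix (Fin n) (Fin n) ℂ)
    (hZ : ((r ^ 2 : ℂ) • (1 : Matrix (Fin n) (Fin n) ℂ) - ∑ i, Z i * (Z i)ᴴ).PosSemidef)
    (k : ℕ) :
    ∀ w : Fin n → ℂ,
      ∑ t : Fin k → Fin d,
          sq2 (((List.map Z (List.ofFn t)).prod)ᴴ *ᵥ w) ≤ r ^ (2 * k) * sq2 w := by
  induction k with
  | zero =>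
    intro w
    simp [Matrix.one_mulVec]
  | succ k ih =>
    intro w
    have hre := (Fin.consEquiv (fun _ : Fin (k + 1) => Fin d)).sum_comp
      (fun t : Fin (k + 1) → Fin d => sq2 (((List.map Z (List.ofFn t)).prod)ᴴ *ᵥ w))
    rw [← hre, Fintype.sum_prod_type]
    have hterm : ∀ (i : Fin d) (t : Fin k → Fin d),
        sq2 (((List.map Z (List.ofFn ((Fin.consEquiv (fun _ : Fin (k+1) => Fin d)) (i, t)))).prod)ᴴ *ᵥ w)
        = sq2 (((List.map Z (List.ofFn t)).prod)ᴴ *ᵥ ((Z i)ᴴ *ᵥ w)) := by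
      intro i t
      have hl : List.ofFn ((Fin.consEquiv (fun _ : Fin (k+1) => Fin d)) (i, t))
          = i :: List.ofFn t := by
        rw [List.ofFn_succ]
        simp [Fin.consEquiv]
      rw [hl, List.map_cons, List.prod_cons, Matrix.conjTranspose_mul,
        ← Matrix.mulVec_mulVec]
    calc ∑ i, ∑ t : Fin k → Fin d,
          sq2 (((List.map Z (List.ofFn ((Fin.consEquiv (fun _ : Fin (k+1) => Fin d)) (i, t)))).prod)ᴴ *ᵥ w)
        = ∑ i, ∑ t : Fin k → Fin d,
          sq2 (((List.map Z (List.ofFn t)).prod)ᴴ *ᵥ ((Z i)ᴴ *ᵥ w)) := by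
          refine Finset.sum_congr rfl fun i _ => Finset.sum_congr rfl fun t _ => hterm i t
      _ ≤ ∑ i, r ^ (2 * k) * sq2 ((Z i)ᴴ *ᵥ w) :=
          Finset.sum_le_sum fun i _ => ih ((Z i)ᴴ *ᵥ w)
      _ = r ^ (2 * k) * ∑ i, sq2 ((Z i)ᴴ *ᵥ w) := by rw [Finset.mul_sum]
      _ ≤ r ^ (2 * k) * (r ^ 2 * sq2 w) := by
          refine mul_le_mul_of_nonneg_left (rowsum_bound Z hZ w) (by positivity)
      _ = r ^ (2 * (k + 1)) * sq2 w := by ring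

end SzegoAux

/-- **Uniform bound on NC Szegő kernel vectors.**
If `Z` is a row contraction of row norm at most `r < 1` and `‖y‖, ‖v‖ ≤ 1`, then the
coefficient sequence of the NC Szegő kernel `K{Z,y,v}` is square-summable with
`∑'_α |⟪Z^α v, y⟫|² ≤ 1/(1 - r²)`. -/

theorem szego_kernel_norm_bound {d n : ℕ} (r : ℝ) (hr0 : 0 ≤ r) (hr1 : r < 1)
    (Z : Fin d → Matrix (Fin n) (Fin n) ℂ)
    (hZ : ((r ^ 2 : ℂ) • (1 : Matrix (Fin n) (Fin n) ℂ) - ∑ i, Z i * (Z i)ᴴ).PosSemidef)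
    (y v : EuclideanSpace ℂ (Fin n)) (hy : ‖y‖ ≤ 1) (hv : ‖v‖ ≤ 1) :
    (Summable fun α : Word d =>
      ‖dotProduct (star (wordProdM Z α *ᵥ fun j => v j)) (fun j => y j)‖ ^ 2) ∧
    ∑' α : Word d,
        ‖dotProduct (star (wordProdM Z α *ᵥ fun j => v j)) (fun j => y j)‖ ^ 2
      ≤ 1 / (1 - r ^ 2) := by
  classical
  set vv : Fin n → ℂ := fun j => v j with hvv
  set yy : Fin n → ℂ := fun j => y j with hyy
  set f : Word d → ℝ := fun α =>
    ‖dotProduct (star (wordProdM Z α *ᵥ vv)) yy‖ ^ 2 with hf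
  have hfnonneg : ∀ α, 0 ≤ f α := fun α => sq_nonneg _
  have hv2 : SzegoAux.sq2 vv ≤ 1 := by
    have h : SzegoAux.sq2 vv = ‖v‖ ^ 2 := by
      rw [EuclideanSpace.norm_eq, Real.sq_sqrt (Finset.sum_nonneg fun _ _ => sq_nonneg _)]
      rfl
    rw [h]; exact pow_le_one₀ (norm_nonneg _) hv
  have hy2 : SzegoAux.sq2 yy ≤ 1 := by
    have h : SzegoAux.sq2 yy = ‖y‖ ^ 2 := by
      rw [EuclideanSpace.norm_eq, Real.sq_sqrt (Finset.sum_nonneg fun _ _ => sq_nonneg _)]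
      rfl
    rw [h]; exact pow_le_one₀ (norm_nonneg _) hy
  have hpt : ∀ α : Word d, f α ≤ SzegoAux.sq2 ((wordProdM Z α)ᴴ *ᵥ yy) := by
    intro α
    have hrw : dotProduct (star (wordProdM Z α *ᵥ vv)) yy
        = dotProduct (star vv) ((wordProdM Z α)ᴴ *ᵥ yy) := by
      rw [Matrix.star_mulVec, ← Matrix.dotProduct_mulVec]
    calc f α = ‖dotProduct (star vv) ((wordProdM Z α)ᴴ *ᵥ yy)‖ ^ 2 := by
          simp only [hf]; rw [hrw]
      _ ≤ SzegoAux.sq2 vv * SzegoAux.sq2 ((wordProdM Z α)ᴴ *ᵥ yy) :=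
          SzegoAux.cauchy_schwarz _ _
      _ ≤ 1 * SzegoAux.sq2 ((wordProdM Z α)ᴴ *ᵥ yy) :=
          mul_le_mul_of_nonneg_right hv2 (SzegoAux.sq2_nonneg _)
      _ = SzegoAux.sq2 ((wordProdM Z α)ᴴ *ᵥ yy) := one_mul _
  have hfin : ∀ s : Finset (Word d), ∑ α ∈ s, f α ≤ 1 / (1 - r ^ 2) := by
    intro s
    set T : ℕ → Finset (Word d) := fun k =>
      Finset.image (fun t : Fin k → Fin d => FreeMonoid.ofList (List.ofFn t))
        Finset.univ with hT
    set N := s.sup (fun α => (FreeMonoid.toList α).length) + 1 with hN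
    have hmemT : ∀ α : Word d, α ∈ T (FreeMonoid.toList α).length := by
      intro α
      refine Finset.mem_image.mpr
        ⟨fun i => (FreeMonoid.toList α).get i, Finset.mem_univ _, ?_⟩
      rw [List.ofFn_get, FreeMonoid.ofList_toList]
    have hsub : s ⊆ (Finset.range N).biUnion T := by
      intro α hα
      refine Finset.mem_biUnion.mpr ⟨(FreeMonoid.toList α).length, ?_, hmemT α⟩
      exact Finset.mem_range.mpr (Nat.lt_succ_of_le (Finset.le_sup hα))
    have hlen : ∀ (k : ℕ) (α : Word d), α ∈ T k → (FreeMonoid.toList α).length = k := by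
      intro k α hα
      obtain ⟨t, -, rfl⟩ := Finset.mem_image.mp hα
      rw [FreeMonoid.toList_ofList, List.length_ofFn]
    have hdisj : (↑(Finset.range N) : Set ℕ).PairwiseDisjoint T := by
      intro a _ b _ hab
      refine Finset.disjoint_left.mpr fun α ha hb => hab ?_
      rw [← hlen a α ha, hlen b α hb]
    have hTk : ∀ k : ℕ, ∑ α ∈ T k, f α ≤ (r ^ 2) ^ k := by
      intro k
      have hinj : Function.Injective
          (fun t : Fin k → Fin d => FreeMonoid.ofList (List.ofFn t)) := by
        intro t₁ t₂ h
        exact List.ofFn_injective (FreeMonoid.ofList.injective h)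
      have himg : ∑ α ∈ T k, f α
          = ∑ t : Fin k → Fin d, f (FreeMonoid.ofList (List.ofFn t)) := by
        rw [hT]
        exact Finset.sum_image fun t₁ _ t₂ _ h => hinj h
      calc ∑ α ∈ T k, f α
          = ∑ t : Fin k → Fin d, f (FreeMonoid.ofList (List.ofFn t)) := himg
        _ ≤ ∑ t : Fin k → Fin d,
              SzegoAux.sq2 (((List.map Z (List.ofFn t)).prod)ᴴ *ᵥ yy) := by
            refine Finset.sum_le_sum fun t _ => ?_
            have := hpt (FreeMonoid.ofList (List.ofFn t))
            simpa [wordProdM, FreeMonoid.toList_ofList] using this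
        _ ≤ r ^ (2 * k) * SzegoAux.sq2 yy := SzegoAux.tuple_sum_bound hr0 Z hZ k yy
        _ ≤ r ^ (2 * k) * 1 := mul_le_mul_of_nonneg_left hy2 (by positivity)
        _ = (r ^ 2) ^ k := by rw [mul_one, pow_mul]
    have hgeom : ∑ k ∈ Finset.range N, (r ^ 2) ^ k ≤ 1 / (1 - r ^ 2) := by
      have h1 : r ^ 2 < 1 := by nlinarith
      have h2 : (0:ℝ) ≤ r ^ 2 := sq_nonneg r
      have h3 := Summable.sum_le_tsum (Finset.range N) (fun k _ => pow_nonneg h2 k)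
        (summable_geometric_of_lt_one h2 h1)
      rw [tsum_geometric_of_lt_one h2 h1] at h3
      rw [one_div]
      exact h3
    calc ∑ α ∈ s, f α ≤ ∑ α ∈ (Finset.range N).biUnion T, f α :=
          Finset.sum_le_sum_of_subset_of_nonneg hsub fun _ _ _ => hfnonneg _
      _ = ∑ k ∈ Finset.range N, ∑ α ∈ T k, f α := Finset.sum_biUnion hdisj
      _ ≤ ∑ k ∈ Finset.range N, (r ^ 2) ^ k := Finset.sum_le_sum fun k _ => hTk k
      _ ≤ 1 / (1 - r ^ 2) := hgeom
  exact ⟨summable_of_sum_le hfnonneg hfin,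
    Summable.tsum_le_of_sum_le (summable_of_sum_le hfnonneg hfin) hfin⟩
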